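/- Let ε, ε' ∈ 𝓔 and let 1 ≤ k < r be such that for every l ∈ {1, …, r} with l ≠ k and every j ∈ J one has Σ_{m=1}^l ε(m,j) = Σ_{m=1}^l ε'(m,j). Then either ε' = ε, or ε' = τ·ε where τ is the transposition of {1, …, r} exchanging k and k+1 (equivalently: for every j ∈ J, ε'(k,j) = ε(k+1,j), ε'(k+1,j) = ε(k,j), and ε'(l,j) = ε(l,j) for all l ∉ {k, k+1}). -/
import Mathlib


/-- The set 𝓔 of functions `ε : {1,…,r} × J → {0,1}` (first variable ranging over
`{1,…,r} ⊆ ℕ`, second over the subtype of members of `J`), such that each column `j`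
sums to `j` and each row is nondecreasing in `j ∈ J`. -/
def IsE (r : ℕ) (J : Finset ℕ) (ε : ℕ → {j // j ∈ J} → ℕ) : Prop :=
  (∀ k ∈ Finset.Icc 1 r, ∀ j, ε k j ≤ 1) ∧
  (∀ j : {j // j ∈ J}, ∑ k ∈ Finset.Icc 1 r, ε k j = (j : ℕ)) ∧
  (∀ k ∈ Finset.Icc 1 r, ∀ j j' : {j // j ∈ J}, (j : ℕ) ≤ (j' : ℕ) → ε k j ≤ ε k j')

/-- if `ε, ε' ∈ 𝓔` and `1 ≤ k < r` are such that all partial sums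
`Σ_{m≤l} ε(m,j)` and `Σ_{m≤l} ε'(m,j)` agree for every `l ≠ k` in `{1,…,r}` and every
`j ∈ J`, then either `ε' = ε` (on the domain) or `ε'` is obtained from `ε` by swapping
rows `k` and `k+1`. -/
theorem stmt_4 (r : ℕ) (hr : 1 ≤ r) (J : Finset ℕ)
    (hJ : J ⊆ Finset.Icc 1 r) (hrJ : r ∈ J)
    (ε ε' : ℕ → {j // j ∈ J} → ℕ) (hε : IsE r J ε) (hε' : IsE r J ε')
    (k : ℕ) (hk1 : 1 ≤ k) (hk2 : k < r)
    (h : ∀ l ∈ Finset.Icc 1 r, l ≠ k → ∀ j : {j // j ∈ J},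
      ∑ m ∈ Finset.Icc 1 l, ε m j = ∑ m ∈ Finset.Icc 1 l, ε' m j) :
    (∀ l ∈ Finset.Icc 1 r, ∀ j, ε' l j = ε l j) ∨
    (∀ j : {j // j ∈ J}, ε' k j = ε (k + 1) j ∧ ε' (k + 1) j = ε k j ∧
      ∀ l ∈ Finset.Icc 1 r, l ≠ k → l ≠ k + 1 → ε' l j = ε l j) := by
  obtain ⟨hb, hs, hm⟩ := hε
  obtain ⟨hb', hs', hm'⟩ := hε'
  obtain ⟨q, rfl⟩ : ∃ q, k = q + 1 := ⟨k - 1, by omega⟩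
  have H : ∀ l, l ≤ r → l ≠ q + 1 → ∀ j : {j // j ∈ J},
      ∑ m ∈ Finset.Icc 1 l, ε m j = ∑ m ∈ Finset.Icc 1 l, ε' m j := by
    intro l hl hlk j
    rcases Nat.eq_zero_or_pos l with h0 | h1
    · simp [h0]
    · exact h l (Finset.mem_Icc.mpr ⟨h1, hl⟩) hlk j
  have Hout : ∀ l, 1 ≤ l → l ≤ r → l ≠ q + 1 → l ≠ q + 2 → ∀ j : {j // j ∈ J},
      ε' l j = ε l j := by
    intro l h1 h2 h3 h4 j
    obtain ⟨m, rfl⟩ : ∃ m, l = m + 1 := ⟨l - 1, by omega⟩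
    have e1 := H (m + 1) h2 h3 j
    have e2 := H m (by omega) (by omega) j
    rw [Finset.sum_Icc_succ_top (by omega : 1 ≤ m + 1) (fun i => ε i j),
        Finset.sum_Icc_succ_top (by omega : 1 ≤ m + 1) (fun i => ε' i j)] at e1
    omega
  have Hpair : ∀ j : {j // j ∈ J},
      ε (q + 1) j + ε (q + 2) j = ε' (q + 1) j + ε' (q + 2) j := by
    intro j
    have e1 := H (q + 2) (by omega) (by omega) j
    have e2 := H q (by omega) (by omega) j
    rw [Finset.sum_Icc_succ_top (by omega : 1 ≤ q + 2) (fun i => ε i j),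
        Finset.sum_Icc_succ_top (by omega : 1 ≤ q + 1) (fun i => ε i j),
        Finset.sum_Icc_succ_top (by omega : 1 ≤ q + 2) (fun i => ε' i j),
        Finset.sum_Icc_succ_top (by omega : 1 ≤ q + 1) (fun i => ε' i j)] at e1
    simp only [show q + 1 + 1 = q + 2 from rfl] at e1
    omega
  have hm1 : q + 1 ∈ Finset.Icc 1 r := Finset.mem_Icc.mpr ⟨by omega, by omega⟩
  have hm2 : q + 2 ∈ Finset.Icc 1 r := Finset.mem_Icc.mpr ⟨by omega, by omega⟩
  by_cases hcase : ∀ j : {j // j ∈ J}, ε' (q + 1) j = ε (q + 1) j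
  · left
    intro p hp j
    rcases eq_or_ne p (q + 1) with rfl | h1
    · exact hcase j
    rcases eq_or_ne p (q + 2) with rfl | h2
    · have := Hpair j
      have := hcase j
      omega
    · exact Hout p (Finset.mem_Icc.mp hp).1 (Finset.mem_Icc.mp hp).2 h1 h2 j
  · right
    push_neg at hcase
    obtain ⟨j0, hj0⟩ := hcase
    have b1 := hb (q + 1) hm1 j0
    have b2 := hb (q + 2) hm2 j0
    have b1' := hb' (q + 1) hm1 j0
    have b2' := hb' (q + 2) hm2 j0
    have hp0 := Hpair j0
    intro j
    have key : ε' (q + 1) j = ε (q + 2) j ∧ ε' (q + 2) j = ε (q + 1) j := by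
      have hpj := Hpair j
      have c1 := hb (q + 1) hm1 j
      have c2 := hb (q + 2) hm2 j
      have c1' := hb' (q + 1) hm1 j
      have c2' := hb' (q + 2) hm2 j
      rcases le_total (j : ℕ) (j0 : ℕ) with hle | hle
      · have m1 := hm (q + 2) hm2 j j0 hle
        have m1' := hm' (q + 1) hm1 j j0 hle
        have m2 := hm (q + 1) hm1 j j0 hle
        have m2' := hm' (q + 2) hm2 j j0 hle
        omega
      · have m1 := hm (q + 1) hm1 j0 j hle
        have m1' := hm' (q + 2) hm2 j0 j hle
        have m2 := hm (q + 2) hm2 j0 j hle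
        have m2' := hm' (q + 1) hm1 j0 j hle
        omega
    refine ⟨key.1, key.2, fun p hp h1 h2 => ?_⟩
    exact Hout p (Finset.mem_Icc.mp hp).1 (Finset.mem_Icc.mp hp).2 h1 h2 j
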